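/- Let (M, Z) be a pair of random variables where M is uniformly distributed on a finite set of size K and Z takes values in a finite set Z^n (n-fold product of a finite set Z). Suppose that for every message m, the total variation distance ε_m := ‖P_Z − P_{Z|M=m}‖ satisfies ε_m ≤ ε ≤ 1/2. Then I(Z ∧ M) ≤ ε · log(|Z|^n / ε). -/

import Mathlib

open scoped BigOperators

def IsPMF {A : Type} [Fintype A] (p : A → ℝ) : Prop :=
  (∀ a, 0 ≤ p a) ∧ ∑ a, p a = 1

noncomputable def entropy {A : Type} [Fintype A] (p : A → ℝ) : ℝ :=
  -∑ a, p a * Real.logb 2 (p a)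

noncomputable def mutualInfo {A B : Type} [Fintype A] [Fintype B]
    (p : A × B → ℝ) : ℝ :=
  entropy (fun a => ∑ b, p (a, b)) + entropy (fun b => ∑ a, p (a, b)) - entropy p

noncomputable def tv {A : Type} [Fintype A] (μ ν : A → ℝ) : ℝ :=
  ∑ a, |μ a - ν a|

section Aux
open Real Set

lemma eta_mono : MonotoneOn Real.negMulLog (Set.Icc 0 (Real.exp (-1))) := by
  apply monotoneOn_of_deriv_nonneg (convex_Icc _ _) Real.continuous_negMulLog.continuousOn
  · rw [interior_Icc]
    intro x hx
    exact (Real.differentiableAt_negMulLog (ne_of_gt hx.1)).differentiableWithinAt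
  · rw [interior_Icc]
    intro x hx
    rw [Real.deriv_negMulLog (ne_of_gt hx.1)]
    have : Real.log x ≤ -1 := by
      calc Real.log x ≤ Real.log (Real.exp (-1)) := Real.log_le_log hx.1 hx.2.le
        _ = -1 := Real.log_exp _
    linarith

lemma eta_subadd {p d : ℝ} (hp : 0 ≤ p) (hd : 0 ≤ d) :
    Real.negMulLog (p + d) ≤ Real.negMulLog p + Real.negMulLog d := by
  have key : ∀ a b : ℝ, 0 ≤ a → 0 ≤ b → a * Real.log a ≤ a * Real.log (a + b) := by
    intro a b ha hb
    rcases eq_or_lt_of_le ha with h | h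
    · simp [← h]
    · exact mul_le_mul_of_nonneg_left (Real.log_le_log h (by linarith)) ha
  have h1 := key p d hp hd
  have h2 := key d p hd hp
  simp only [Real.negMulLog, neg_mul]
  rw [add_comm d p] at h2
  nlinarith [h1, h2]

lemma eta_one_sub {d : ℝ} (hd : 0 ≤ d) (hd2 : d ≤ 1/2) :
    Real.negMulLog (1 - d) ≤ Real.negMulLog d := by
  set φ : ℝ → ℝ := fun x => Real.negMulLog x - Real.negMulLog (1 - x) with hφ
  have hconc : ConcaveOn ℝ (Set.Icc 0 (1/2)) φ := by
    apply concaveOn_of_hasDerivWithinAt2_nonpos (f' := fun x => -Real.log x - Real.log (1-x) - 2)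
      (f'' := fun x => -x⁻¹ + (1-x)⁻¹) (convex_Icc _ _)
    · exact (Real.continuous_negMulLog.sub
        (Real.continuous_negMulLog.comp (continuous_const.sub continuous_id))).continuousOn
    · rw [interior_Icc]
      intro x hx
      have h1 : HasDerivAt Real.negMulLog (-Real.log x - 1) x :=
        Real.hasDerivAt_negMulLog (ne_of_gt hx.1)
      have h2 : HasDerivAt (fun x : ℝ => Real.negMulLog (1 - x))
          ((-Real.log (1-x) - 1) * (-1)) x := by
        have hne : (1:ℝ) - x ≠ 0 := by
          have : x < 1 := lt_of_lt_of_le hx.2 (by norm_num)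
          intro h; nlinarith [h]
        exact (Real.hasDerivAt_negMulLog hne).comp x ((hasDerivAt_id x).const_sub 1)
      have := (h1.sub h2)
      exact (this.congr_deriv (by ring)).hasDerivWithinAt
    · rw [interior_Icc]
      intro x hx
      have hne' : (1:ℝ) - x ≠ 0 := by
        have : x < 1 := lt_of_lt_of_le hx.2 (by norm_num)
        intro h; nlinarith [h]
      have h1 : HasDerivAt (fun x : ℝ => -Real.log x) (-x⁻¹) x := (Real.hasDerivAt_log (ne_of_gt hx.1)).neg
      have h2 : HasDerivAt (fun x : ℝ => -Real.log (1-x)) ((1-x)⁻¹) x := by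
        have := ((Real.hasDerivAt_log hne').comp x ((hasDerivAt_id x).const_sub 1)).neg
        exact this.congr_deriv (by ring)
      have h3 : HasDerivAt (fun x : ℝ => -Real.log x - Real.log (1-x) - 2)
          (-x⁻¹ + (1-x)⁻¹) x := by
        exact (h1.add h2).sub_const 2
      exact h3.hasDerivWithinAt
    · rw [interior_Icc]
      intro x hx
      have hx1 : 0 < x := hx.1
      have hx2 : x ≤ 1 - x := by linarith [hx.2]
      have : x⁻¹ ≥ (1-x)⁻¹ := by
        apply inv_anti₀ hx1 hx2
      linarith
  have h0 : φ 0 = 0 := by simp [hφ]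
  have h12 : φ (1/2) = 0 := by norm_num [hφ]
  have hmem0 : (0:ℝ) ∈ Set.Icc (0:ℝ) (1/2) := by norm_num
  have hmem12 : (1/2:ℝ) ∈ Set.Icc (0:ℝ) (1/2) := by norm_num
  have key := hconc.2 hmem0 hmem12 (show (0:ℝ) ≤ 1 - 2*d by linarith)
    (show (0:ℝ) ≤ 2*d by linarith) (show (1:ℝ) - 2*d + 2*d = 1 by ring)
  rw [h0, h12] at key
  have : φ d ≥ 0 := by
    have heq : (1 - 2*d) • (0:ℝ) + (2*d) • (1/2:ℝ) = d := by simp; ring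
    rw [heq] at key
    simpa using key
  simp only [hφ] at this
  linarith


lemma eta_diff_le {p d : ℝ} (hp : 0 ≤ p) (hd : 0 ≤ d) (hd2 : d ≤ 1/2) (hpd : p + d ≤ 1) :
    Real.negMulLog p - Real.negMulLog (p + d) ≤ Real.negMulLog d := by
  rcases eq_or_lt_of_le hd with h | hdpos
  · simp [← h]
  set g : ℝ → ℝ := fun x => Real.negMulLog (x + d) - Real.negMulLog x with hg
  have hderiv : ∀ x ∈ Set.Ioo (0:ℝ) (1 - d), HasDerivAt g (Real.log x - Real.log (x + d)) x := by
    intro x hx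
    have h1 : HasDerivAt (fun x : ℝ => Real.negMulLog (x + d))
        ((-Real.log (x + d) - 1) * 1) x := by
      have := (Real.hasDerivAt_negMulLog (by nlinarith [hx.1] : x + d ≠ 0)).comp x
        ((hasDerivAt_id' x).add_const d)
      exact this
    have h2 : HasDerivAt Real.negMulLog (-Real.log x - 1) x :=
      Real.hasDerivAt_negMulLog (ne_of_gt hx.1)
    have := h1.sub h2
    exact this.congr_deriv (by ring)
  have hanti : AntitoneOn g (Set.Icc 0 (1 - d)) := by
    apply antitoneOn_of_deriv_nonpos (convex_Icc _ _)
    · exact ((Real.continuous_negMulLog.comp (continuous_id.add continuous_const)).sub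
        Real.continuous_negMulLog).continuousOn
    · rw [interior_Icc]
      exact fun x hx => (hderiv x hx).differentiableAt.differentiableWithinAt
    · rw [interior_Icc]
      intro x hx
      rw [(hderiv x hx).deriv]
      have : Real.log x ≤ Real.log (x + d) := Real.log_le_log hx.1 (by linarith)
      linarith
  have hple : p ≤ 1 - d := by linarith
  have hkey := hanti (Set.mem_Icc.mpr ⟨hp, hple⟩)
    (Set.mem_Icc.mpr ⟨by linarith, le_refl _⟩) hple
  have hg1 : g (1 - d) = - Real.negMulLog (1 - d) := by
    simp [hg, show 1 - d + d = 1 by ring]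
  rw [hg1] at hkey
  have := eta_one_sub hd hd2
  simp only [hg] at hkey
  linarith

lemma eta_abs_diff {a b : ℝ} (ha : 0 ≤ a) (hb : 0 ≤ b) (h : |a - b| ≤ 1/2) (ha1 : a ≤ 1) (hb1 : b ≤ 1) :
    |Real.negMulLog a - Real.negMulLog b| ≤ Real.negMulLog |a - b| := by
  rcases le_total a b with hle | hle
  · have hd : |a - b| = b - a := by rw [abs_sub_comm]; exact abs_of_nonneg (by linarith)
    rw [hd]
    rw [abs_le]
    constructor
    · have := eta_subadd (p := a) (d := b - a) ha (by linarith)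
      rw [show a + (b - a) = b by ring] at this
      linarith
    · have := eta_diff_le (p := a) (d := b - a) ha (by linarith) (by rw [hd] at h; linarith)
        (by linarith)
      rw [show a + (b - a) = b by ring] at this
      linarith
  · have hd : |a - b| = a - b := abs_of_nonneg (by linarith)
    rw [hd]
    rw [abs_le]
    constructor
    · have := eta_diff_le (p := b) (d := a - b) hb (by linarith) (by rw [hd] at h; linarith)
        (by linarith)
      rw [show b + (a - b) = a by ring] at this
      linarith
    · have := eta_subadd (p := b) (d := a - b) hb (by linarith)
      rw [show b + (a - b) = a by ring] at this
      linarith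
-- PMF helper
lemma entropy_diff_le {A : Type} [Fintype A] (P Q : A → ℝ) (hP : IsPMF P) (hQ : IsPMF Q)
    (ε : ℝ) (hε2 : ε ≤ 1/2) (htv : ∑ a, |P a - Q a| ≤ ε) :
    ∑ a, Real.negMulLog (P a) - ∑ a, Real.negMulLog (Q a) ≤
      ε * Real.log ((Fintype.card A : ℝ) / ε) := by
  have hεnn : 0 ≤ ε := le_trans (Finset.sum_nonneg fun a _ => abs_nonneg _) htv
  have hPle : ∀ a, P a ≤ 1 := by
    intro a
    rw [← hP.2]
    exact Finset.single_le_sum (fun b _ => hP.1 b) (Finset.mem_univ a)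
  have hQle : ∀ a, Q a ≤ 1 := by
    intro a
    rw [← hQ.2]
    exact Finset.single_le_sum (fun b _ => hQ.1 b) (Finset.mem_univ a)
  have hdle : ∀ a, |P a - Q a| ≤ ε := by
    intro a
    refine le_trans ?_ htv
    exact Finset.single_le_sum (f := fun b => |P b - Q b|) (fun b _ => abs_nonneg _)
      (Finset.mem_univ a)
  -- card cases
  rcases Nat.lt_or_ge (Fintype.card A) 2 with hcard | hcard
  · interval_cases h : Fintype.card A
    · exfalso
      have : IsEmpty A := Fintype.card_eq_zero_iff.mp h
      have := hP.2
      simp [Finset.univ_eq_empty] at this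
    · obtain ⟨a0, ha0⟩ := Fintype.card_eq_one_iff.mp h
      have hsum : ∀ (f : A → ℝ), ∑ a, f a = f a0 := by
        intro f
        rw [show (Finset.univ : Finset A) = {a0} by
          ext x; simp [ha0 x]]
        simp
      have hP0 : P a0 = 1 := by rw [← hP.2, hsum]
      have hQ0 : Q a0 = 1 := by rw [← hQ.2, hsum]
      rw [hsum (fun a => Real.negMulLog (P a)), hsum (fun a => Real.negMulLog (Q a)),
        hP0, hQ0]
      simp only [Real.negMulLog_one, sub_self]
      rcases eq_or_lt_of_le hεnn with he | he
      · simp [← he]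
      · apply mul_nonneg hεnn
        apply Real.log_nonneg
        rw [le_div_iff₀ he]
        push_cast [h]
        linarith
  · -- main case : N ≥ 2
    set N : ℝ := (Fintype.card A : ℝ) with hN
    have hN2 : (2:ℝ) ≤ N := by rw [hN]; exact_mod_cast hcard
    have hNpos : (0:ℝ) < N := by linarith
    set s : ℝ := ∑ a, |P a - Q a| with hs
    have hsnn : 0 ≤ s := Finset.sum_nonneg fun a _ => abs_nonneg _
    have step1 : ∑ a, Real.negMulLog (P a) - ∑ a, Real.negMulLog (Q a) ≤
        ∑ a, Real.negMulLog |P a - Q a| := by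
      rw [← Finset.sum_sub_distrib]
      apply Finset.sum_le_sum
      intro a _
      calc Real.negMulLog (P a) - Real.negMulLog (Q a)
          ≤ |Real.negMulLog (P a) - Real.negMulLog (Q a)| := le_abs_self _
        _ ≤ Real.negMulLog |P a - Q a| :=
            eta_abs_diff (hP.1 a) (hQ.1 a) (le_trans (hdle a) hε2) (hPle a) (hQle a)
    have step2 : ∑ a, Real.negMulLog |P a - Q a| ≤ N * Real.negMulLog (s / N) := by
      have hjensen := Real.concaveOn_negMulLog.le_map_sum
        (t := Finset.univ) (w := fun _ : A => N⁻¹) (p := fun a => |P a - Q a|)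
        (fun a _ => by positivity)
        (by
          rw [Finset.sum_const, Finset.card_univ, nsmul_eq_mul]
          field_simp
          exact hN.symm)
        (fun a _ => Set.mem_Ici.mpr (abs_nonneg _))
      have h1 : ∑ a : A, N⁻¹ • Real.negMulLog |P a - Q a|
          = N⁻¹ * ∑ a, Real.negMulLog |P a - Q a| := by
        rw [Finset.mul_sum]; rfl
      have h2 : (∑ a : A, N⁻¹ • |P a - Q a|) = s / N := by
        simp only [smul_eq_mul, ← Finset.mul_sum, ← hs]
        ring
      rw [h1, h2] at hjensen
      calc ∑ a, Real.negMulLog |P a - Q a|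
          = N * (N⁻¹ * ∑ a, Real.negMulLog |P a - Q a|) := by field_simp
        _ ≤ N * Real.negMulLog (s / N) :=
            mul_le_mul_of_nonneg_left hjensen hNpos.le
    have step3 : N * Real.negMulLog (s / N) ≤ N * Real.negMulLog (ε / N) := by
      apply mul_le_mul_of_nonneg_left _ hNpos.le
      have hquarter : (1:ℝ)/4 ≤ Real.exp (-1) := by
        rw [Real.exp_neg]
        rw [div_le_iff₀ (by norm_num : (0:ℝ) < 4)]
        rw [inv_mul_eq_div, le_div_iff₀ (Real.exp_pos 1)]
        nlinarith [Real.exp_one_lt_d9]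
      have hεN : ε / N ≤ Real.exp (-1) := by
        have h14 : ε / N ≤ (1/2) / 2 := div_le_div₀ (by norm_num) hε2 (by norm_num) hN2
        calc ε / N ≤ (1/2)/2 := h14
          _ = 1/4 := by norm_num
          _ ≤ Real.exp (-1) := hquarter
      have hsN : s / N ≤ ε / N := by gcongr
      exact eta_mono ⟨by positivity, le_trans hsN hεN⟩ ⟨by positivity, hεN⟩ hsN
    have step4 : N * Real.negMulLog (ε / N) = ε * Real.log (N / ε) := by
      rcases eq_or_lt_of_le hεnn with he | he
      · simp [← he]
      · have e1 : Real.log (ε/N) = Real.log ε - Real.log N := Real.log_div he.ne' hNpos.ne'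
        have e2 : Real.log (N/ε) = Real.log N - Real.log ε := Real.log_div hNpos.ne' he.ne'
        rw [Real.negMulLog, e1, e2]
        field_simp
        ring
    linarith
end Aux

lemma entropy_eq {A : Type} [Fintype A] (q : A → ℝ) :
    entropy q = (∑ a, Real.negMulLog (q a)) / Real.log 2 := by
  unfold entropy
  rw [Finset.sum_div, ← Finset.sum_neg_distrib]
  apply Finset.sum_congr rfl
  intro a _
  rw [Real.negMulLog, Real.logb]
  ring

/-- if each conditional output distribution is `ε`-close in total
variation to the output marginal, `ε ≤ 1/2`, then `I(Z ∧ M) ≤ ε·log(|Z|ⁿ/ε)`. -/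
theorem stmt11 {Z : Type} [Fintype Z] (n K : ℕ) (hK : 0 < K) (hZ : 0 < Fintype.card Z)
    (p : Fin K × (Fin n → Z) → ℝ) (hp : IsPMF p)
    (huniform : ∀ m, ∑ z : Fin n → Z, p (m, z) = 1 / (K : ℝ))
    (ε : ℝ) (hε : ε ≤ 1 / 2)
    (hclose : ∀ m : Fin K,
      tv (fun z => ∑ m', p (m', z)) (fun z => (K : ℝ) * p (m, z)) ≤ ε) :
    mutualInfo (fun q : (Fin n → Z) × Fin K => p (q.2, q.1)) ≤
      ε * Real.logb 2 ((Fintype.card Z : ℝ) ^ n / ε) := by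
  have hKR : (0:ℝ) < (K:ℝ) := by exact_mod_cast hK
  have hlog2 : (0:ℝ) < Real.log 2 := Real.log_pos (by norm_num)
  set Nr : ℝ := (Fintype.card (Fin n → Z) : ℝ) with hNr
  have hcardA : Nr = (Fintype.card Z : ℝ) ^ n := by
    rw [hNr, show Fintype.card (Fin n → Z) = Fintype.card Z ^ n by
      simp [Fintype.card_fun]]
    push_cast
    ring
  set PZ : (Fin n → Z) → ℝ := fun z => ∑ m', p (m', z) with hPZ
  have hPZpmf : IsPMF PZ := by
    constructor
    · intro z; exact Finset.sum_nonneg fun m _ => hp.1 _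
    · rw [hPZ]
      rw [Finset.sum_comm]
      rw [Finset.sum_congr rfl fun m _ => huniform m]
      rw [Finset.sum_const, Finset.card_univ, Fintype.card_fin, nsmul_eq_mul]
      field_simp
  have hQpmf : ∀ m : Fin K, IsPMF (fun z : Fin n → Z => (K:ℝ) * p (m, z)) := by
    intro m
    constructor
    · intro z; exact mul_nonneg hKR.le (hp.1 _)
    · rw [← Finset.mul_sum, huniform m]
      field_simp
  have hm_bound : ∀ m : Fin K,
      ∑ z, Real.negMulLog (PZ z) - ∑ z, Real.negMulLog ((K:ℝ) * p (m, z)) ≤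
        ε * Real.log (Nr / ε) := by
    intro m
    exact entropy_diff_le PZ (fun z => (K:ℝ) * p (m, z)) hPZpmf (hQpmf m) ε hε
      (by simpa [tv, hPZ] using hclose m)
  have hEm : ∀ m : Fin K, ∑ z, Real.negMulLog ((K:ℝ) * p (m, z)) =
      -Real.log K + (K:ℝ) * ∑ z, Real.negMulLog (p (m, z)) := by
    intro m
    rw [Finset.sum_congr rfl fun (z : Fin n → Z) _ => Real.negMulLog_mul (K:ℝ) (p (m, z)),
      Finset.sum_add_distrib, ← Finset.sum_mul, huniform m, ← Finset.mul_sum]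
    rw [Real.negMulLog]
    field_simp
  have hMI : mutualInfo (fun q : (Fin n → Z) × Fin K => p (q.2, q.1)) =
      ((1/(K:ℝ)) * ∑ m : Fin K, ((∑ z, Real.negMulLog (PZ z))
        - ∑ z, Real.negMulLog ((K:ℝ) * p (m, z)))) / Real.log 2 := by
    unfold mutualInfo
    rw [entropy_eq, entropy_eq, entropy_eq]
    rw [← add_div, div_sub_div_same]
    congr 1
    have h2 : (∑ m : Fin K, Real.negMulLog (∑ z : Fin n → Z, p (m, z))) = Real.log K := by
      rw [Finset.sum_congr rfl fun m _ => by rw [huniform m]]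
      rw [Finset.sum_const, Finset.card_univ, Fintype.card_fin, nsmul_eq_mul]
      rw [Real.negMulLog, Real.log_div one_ne_zero hKR.ne']
      field_simp
      simp
    have h3 : (∑ q : (Fin n → Z) × Fin K, Real.negMulLog (p (q.2, q.1)))
        = ∑ m : Fin K, ∑ z : Fin n → Z, Real.negMulLog (p (m, z)) := by
      rw [Fintype.sum_prod_type]
      exact Finset.sum_comm
    rw [h2, h3]
    rw [Finset.sum_sub_distrib]
    rw [Finset.sum_congr rfl fun m _ => hEm m]
    rw [Finset.sum_const, Finset.card_univ, Fintype.card_fin, nsmul_eq_mul]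
    rw [Finset.sum_add_distrib, Finset.sum_const, Finset.card_univ, Fintype.card_fin,
      nsmul_eq_mul, ← Finset.mul_sum]
    field_simp
    ring
  rw [hMI]
  have hsum_le : (1/(K:ℝ)) * ∑ m : Fin K, ((∑ z, Real.negMulLog (PZ z))
      - ∑ z, Real.negMulLog ((K:ℝ) * p (m, z))) ≤ ε * Real.log (Nr / ε) := by
    calc (1/(K:ℝ)) * ∑ m : Fin K, ((∑ z, Real.negMulLog (PZ z))
          - ∑ z, Real.negMulLog ((K:ℝ) * p (m, z)))
        ≤ (1/(K:ℝ)) * ∑ m : Fin K, ε * Real.log (Nr / ε) := by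
          apply mul_le_mul_of_nonneg_left _ (by positivity)
          exact Finset.sum_le_sum fun m _ => hm_bound m
      _ = ε * Real.log (Nr / ε) := by
          rw [Finset.sum_const, Finset.card_univ, Fintype.card_fin, nsmul_eq_mul]
          field_simp
  calc ((1/(K:ℝ)) * ∑ m : Fin K, ((∑ z, Real.negMulLog (PZ z))
        - ∑ z, Real.negMulLog ((K:ℝ) * p (m, z)))) / Real.log 2
      ≤ (ε * Real.log (Nr / ε)) / Real.log 2 := by gcongr
    _ = ε * Real.logb 2 (Nr / ε) := by rw [Real.logb]; ring
    _ = ε * Real.logb 2 ((Fintype.card Z : ℝ) ^ n / ε) := by rw [hcardA]
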